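/- arXiv:2502.07567 — 2 statements merged into one kernel-verified Lean document; each statement's English description precedes it below -/
import Mathlib

section
/- Let 1 ≤ r ≤ m. For every natural number i with i ≤ 2(m − r), the i-th homotopy group π_i(V_r(ℂ^m), e) based at the standard frame e is trivial (a subsingleton); in particular V_r(ℂ^m) is path-connected and simply connected when r < m. -/
open scoped Topology

/-- The complex Stiefel manifold `V_r(ℂ^m)`: the set of `r`-tuples of vectors of `ℂ^m`
that are linearly independent over `ℂ`, topologized as a subspace of the product. -/
def complexStiefel (m r : ℕ) : Set (Fin r → EuclideanSpace ℂ (Fin m)) :=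
  { v | LinearIndependent ℂ v }

/-- The standard frame: the first `r` standard basis vectors of `ℂ^m`. -/
noncomputable def stdFrame (m r : ℕ) (h : r ≤ m) : Fin r → EuclideanSpace ℂ (Fin m) :=
  fun i => EuclideanSpace.single (Fin.castLE h i) 1

theorem stdFrame_mem (m r : ℕ) (h : r ≤ m) : stdFrame m r h ∈ complexStiefel m r := by
  have hb : LinearIndependent ℂ (fun i : Fin m => EuclideanSpace.single i (1 : ℂ)) := by
    have hfun : (fun i : Fin m => EuclideanSpace.single i (1 : ℂ)) =
        ⇑(EuclideanSpace.basisFun (Fin m) ℂ) := by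
      funext i
      rw [EuclideanSpace.basisFun_apply]
    rw [hfun, ← OrthonormalBasis.coe_toBasis]
    exact (EuclideanSpace.basisFun (Fin m) ℂ).toBasis.linearIndependent
  exact hb.comp (Fin.castLE h) (Fin.castLE_injective h)

open scoped NNReal ENNReal unitInterval
open Metric Set Module






section StiefelAux

variable {α : Type*} [MetricSpace α] {E : Type*} [NormedAddCommGroup E] [NormedSpace ℝ E]

/-- Product of a bounded Lipschitz scalar function with a bounded Lipschitz vector function
is Lipschitz. -/
theorem lipschitzWith_smul_of_bound {φ : α → ℝ} {u : α → E} {Kφ Ku : ℝ≥0} {Mφ Mu : ℝ}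
    (hφ : LipschitzWith Kφ φ) (hu : LipschitzWith Ku u)
    (hMφ : ∀ x, |φ x| ≤ Mφ) (hMu : ∀ x, ‖u x‖ ≤ Mu) :
    LipschitzWith (Mφ.toNNReal * Ku + Mu.toNNReal * Kφ) (fun x => φ x • u x) := by
  apply LipschitzWith.of_dist_le_mul
  intro x y
  have h1 : dist (φ x • u x) (φ y • u y) ≤ |φ x| * dist (u x) (u y) + dist (φ x) (φ y) * ‖u y‖ := by
    calc dist (φ x • u x) (φ y • u y)
        ≤ dist (φ x • u x) (φ x • u y) + dist (φ x • u y) (φ y • u y) := dist_triangle _ _ _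
      _ = |φ x| * dist (u x) (u y) + dist (φ x) (φ y) * ‖u y‖ := by
          rw [dist_eq_norm, dist_eq_norm, dist_eq_norm, dist_eq_norm, ← smul_sub, ← sub_smul,
            norm_smul, norm_smul, Real.norm_eq_abs, Real.norm_eq_abs]
  have h2 : |φ x| * dist (u x) (u y) ≤ Mφ.toNNReal * (Ku * dist x y) := by
    have := hu.dist_le_mul x y
    have h3 : |φ x| ≤ (Mφ.toNNReal : ℝ) := (hMφ x).trans (Real.le_coe_toNNReal _)
    exact mul_le_mul h3 this dist_nonneg (Mφ.toNNReal.coe_nonneg)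
  have h4 : dist (φ x) (φ y) * ‖u y‖ ≤ (Kφ * dist x y) * Mu.toNNReal := by
    have := hφ.dist_le_mul x y
    have h5 : ‖u y‖ ≤ (Mu.toNNReal : ℝ) := (hMu y).trans (Real.le_coe_toNNReal _)
    exact mul_le_mul this h5 (norm_nonneg _) (by positivity)
  calc dist (φ x • u x) (φ y • u y) ≤ Mφ.toNNReal * (Ku * dist x y) + (Kφ * dist x y) * Mu.toNNReal :=
        h1.trans (add_le_add h2 h4)
    _ = (Mφ.toNNReal * Ku + Mu.toNNReal * Kφ) * dist x y := by ring

/-- The subalgebra of Lipschitz functions in `C(α, ℝ)`, for `α` a compact metric space. -/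
def lipschitzSubalgebra (α : Type*) [MetricSpace α] [CompactSpace α] : Subalgebra ℝ C(α, ℝ) where
  carrier := {f | ∃ L : ℝ≥0, LipschitzWith L f}
  mul_mem' := by
    rintro f g ⟨Lf, hf⟩ ⟨Lg, hg⟩
    refine ⟨‖f‖₊ * Lg + ‖g‖₊ * Lf, ?_⟩
    apply LipschitzWith.of_dist_le_mul
    intro x y
    have h1 : dist ((f * g) x) ((f * g) y) ≤ |f x| * dist (g x) (g y) + dist (f x) (f y) * |g y| := by
      simp only [ContinuousMap.mul_apply, Real.dist_eq]
      calc |f x * g x - f y * g y| = |f x * (g x - g y) + (f x - f y) * g y| := by ring_nf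
        _ ≤ |f x * (g x - g y)| + |(f x - f y) * g y| := abs_add_le _ _
        _ = |f x| * |g x - g y| + |f x - f y| * |g y| := by rw [abs_mul, abs_mul]
    have h2 : |f x| * dist (g x) (g y) ≤ ‖f‖ * (Lg * dist x y) :=
      mul_le_mul (by simpa using f.norm_coe_le_norm x) (hg.dist_le_mul x y) dist_nonneg
        (norm_nonneg _)
    have h3 : dist (f x) (f y) * |g y| ≤ (Lf * dist x y) * ‖g‖ :=
      mul_le_mul (hf.dist_le_mul x y) (by simpa using g.norm_coe_le_norm y) (abs_nonneg _)
        (by positivity)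
    calc dist ((f * g) x) ((f * g) y) ≤ ‖f‖ * (Lg * dist x y) + (Lf * dist x y) * ‖g‖ :=
          h1.trans (add_le_add h2 h3)
      _ = ((‖f‖₊ * Lg + ‖g‖₊ * Lf : ℝ≥0) : ℝ) * dist x y := by
          push_cast [coe_nnnorm]; ring
  add_mem' := by
    rintro f g ⟨Lf, hf⟩ ⟨Lg, hg⟩
    exact ⟨Lf + Lg, hf.add hg⟩
  algebraMap_mem' := fun c => ⟨0, by
    have : ⇑(algebraMap ℝ C(α, ℝ) c) = Function.const α c := rfl
    rw [this]; exact LipschitzWith.const' c⟩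

theorem lipschitzSubalgebra_separatesPoints (α : Type*) [MetricSpace α] [CompactSpace α] :
    (lipschitzSubalgebra α).SeparatesPoints := by
  intro x y hxy
  refine ⟨_, ⟨⟨⟨fun z => dist z y, continuous_id.dist continuous_const⟩,
    ⟨1, LipschitzWith.dist_left y⟩, rfl⟩, ?_⟩⟩
  simp [dist_eq_zero, hxy]

/-- Every real-valued continuous function on a compact metric space can be uniformly
approximated by Lipschitz functions. -/
theorem exists_lipschitz_approx_real {α : Type*} [MetricSpace α] [CompactSpace α]
    (f : C(α, ℝ)) {ε : ℝ} (hε : 0 < ε) :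
    ∃ g : α → ℝ, (∃ L : ℝ≥0, LipschitzWith L g) ∧ ∀ x, |f x - g x| ≤ ε := by
  have hA := ContinuousMap.subalgebra_topologicalClosure_eq_top_of_separatesPoints
    (lipschitzSubalgebra α) (lipschitzSubalgebra_separatesPoints α)
  have hf : f ∈ (lipschitzSubalgebra α).topologicalClosure := hA ▸ trivial
  rw [← SetLike.mem_coe, Subalgebra.topologicalClosure_coe] at hf
  obtain ⟨g, hgA, hgf⟩ := Metric.mem_closure_iff.1 hf ε hε
  obtain ⟨L, hL⟩ := hgA
  exact ⟨⇑g, ⟨L, hL⟩, fun x => by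
    have := ContinuousMap.dist_apply_le_dist (f := f) (g := g) x
    rw [Real.dist_eq] at this
    exact this.trans hgf.le⟩








theorem lipschitzWith_finset_sum {ι : Type*} (s : Finset ι) (f : ι → α → E) (K : ι → ℝ≥0)
    (h : ∀ i ∈ s, LipschitzWith (K i) (f i)) :
    LipschitzWith (∑ i ∈ s, K i) (fun x => ∑ i ∈ s, f i x) := by
  classical
  induction s using Finset.cons_induction with
  | empty => simpa using LipschitzWith.const' (0 : E)
  | cons a s ha ih =>
    simp only [Finset.sum_cons]
    exact (h a (Finset.mem_cons_self a s)).add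
      (ih fun i hi => h i (Finset.mem_cons_of_mem hi))

theorem exists_lipschitz_approx [CompactSpace α] [FiniteDimensional ℝ E]
    (f : C(α, E)) {ε : ℝ} (hε : 0 < ε) :
    ∃ g : α → E, (∃ L : ℝ≥0, LipschitzWith L g) ∧ ∀ x, ‖f x - g x‖ ≤ ε := by
  classical
  set b := finBasis ℝ E
  set D := finrank ℝ E
  set B : ℝ := ∑ d : Fin D, ‖b d‖ with hB
  have hB0 : 0 ≤ B := Finset.sum_nonneg fun d _ => norm_nonneg _
  have hε' : 0 < ε / (B + 1) := by positivity
  have hcoord : ∀ d : Fin D, Continuous fun x : α => b.repr (f x) d := by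
    intro d
    exact (LinearMap.continuous_of_finiteDimensional
      ((Finsupp.lapply d).comp (b.repr : E →ₗ[ℝ] (Fin D →₀ ℝ)))).comp f.continuous
  choose g hgL hgapprox using fun d : Fin D =>
    exists_lipschitz_approx_real ⟨fun x => b.repr (f x) d, hcoord d⟩ hε'
  choose L hL using hgL
  refine ⟨fun x => ∑ d : Fin D, g d x • b d, ⟨∑ d : Fin D, (L d * ‖b d‖₊), ?_⟩, ?_⟩
  · apply lipschitzWith_finset_sum
    intro d _
    apply LipschitzWith.of_dist_le_mul
    intro x y
    rw [dist_eq_norm, ← sub_smul, norm_smul, Real.norm_eq_abs, ← Real.dist_eq]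
    calc dist (g d x) (g d y) * ‖b d‖ ≤ (L d * dist x y) * ‖b d‖ :=
          mul_le_mul_of_nonneg_right ((hL d).dist_le_mul x y) (norm_nonneg _)
      _ = ((L d * ‖b d‖₊ : ℝ≥0) : ℝ) * dist x y := by push_cast [coe_nnnorm]; ring
  · intro x
    have hfx : f x = ∑ d : Fin D, b.repr (f x) d • b d := (b.sum_repr (f x)).symm
    calc ‖f x - ∑ d : Fin D, g d x • b d‖
        = ‖∑ d : Fin D, (b.repr (f x) d - g d x) • b d‖ := by
          conv_lhs => rw [hfx]
          rw [← Finset.sum_sub_distrib]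
          simp_rw [sub_smul]
      _ ≤ ∑ d : Fin D, ‖(b.repr (f x) d - g d x) • b d‖ := norm_sum_le _ _
      _ ≤ ∑ d : Fin D, (ε / (B + 1)) * ‖b d‖ := by
          apply Finset.sum_le_sum
          intro d _
          rw [norm_smul, Real.norm_eq_abs]
          exact mul_le_mul_of_nonneg_right (hgapprox d x) (norm_nonneg _)
      _ = (ε / (B + 1)) * B := by rw [← Finset.mul_sum]
      _ ≤ ε := by
          rw [div_mul_eq_mul_div, div_le_iff₀ (by linarith)]
          nlinarith

end StiefelAux

section Stiefel

variable (m r : ℕ)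

/-- Ambient space of the Stiefel manifold. -/
abbrev stiefelAmbient := Fin r → EuclideanSpace ℂ (Fin m)

/-- Parametrization of tuples whose `j`-th vector depends linearly on the others. -/
noncomputable def depMap (j : Fin r)
    (p : ({k : Fin r // k ≠ j} → EuclideanSpace ℂ (Fin m)) × ({k : Fin r // k ≠ j} → ℂ))
    (k : Fin r) : EuclideanSpace ℂ (Fin m) :=
  if h : k = j then ∑ l : {k : Fin r // k ≠ j}, p.2 l • p.1 l else p.1 ⟨k, h⟩

theorem exists_depMap_eq {v : stiefelAmbient m r} (hv : v ∉ complexStiefel m r) :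
    ∃ j p, v = depMap m r j p := by
  classical
  have hv' : ¬ LinearIndependent ℂ v := hv
  obtain ⟨g, hsum, j, hj⟩ := Fintype.not_linearIndependent_iff.1 hv'
  refine ⟨j, ⟨fun l => v l, fun l => -(g l / g j)⟩, ?_⟩
  funext k
  by_cases hk : k = j
  · subst hk
    have hsplit : ∑ x ∈ Finset.univ.erase k, g x • v x
        = ∑ l : {x : Fin r // x ≠ k}, g l • v l :=
      Finset.sum_subtype (Finset.univ.erase k)
        (fun x => by simp [Finset.mem_erase]) (fun x => g x • v x)
    have herase : ∑ x ∈ Finset.univ.erase k, g x • v x + g k • v k = 0 :=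
      (Finset.sum_erase_add _ _ (Finset.mem_univ k)).trans hsum
    have hsum2 : ∑ l : {x : Fin r // x ≠ k}, g l • v l = -(g k • v k) := by
      rw [← hsplit]
      exact eq_neg_of_add_eq_zero_left herase
    have key : -∑ l : {x : Fin r // x ≠ k}, (g l / g k) • v l = v k := by
      have h1 : ∑ l : {x : Fin r // x ≠ k}, (g l / g k) • v l
          = (g k)⁻¹ • ∑ l : {x : Fin r // x ≠ k}, g l • v l := by
        rw [Finset.smul_sum]
        refine Finset.sum_congr rfl fun l _ => ?_
        rw [smul_smul]
        congr 1
        field_simp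
      rw [h1, hsum2, smul_neg, inv_smul_smul₀ hj, neg_neg]
    show v k = if h : k = k then _ else _
    rw [dif_pos rfl]
    simp only [neg_smul, Finset.sum_neg_distrib]
    exact key.symm
  · simp only [depMap, dif_neg hk]

theorem contDiff_depMap (j : Fin r) : ContDiff ℂ 1 (depMap m r j) := by
  apply contDiff_pi.2
  intro k
  by_cases hk : k = j
  · simp only [depMap, dif_pos hk]
    apply ContDiff.sum
    intro l _
    have h1 : ContDiff ℂ 1 (fun p : ({k : Fin r // k ≠ j} → EuclideanSpace ℂ (Fin m))
        × ({k : Fin r // k ≠ j} → ℂ) => p.2 l) := contDiff_pi.1 contDiff_snd l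
    have h2 : ContDiff ℂ 1 (fun p : ({k : Fin r // k ≠ j} → EuclideanSpace ℂ (Fin m))
        × ({k : Fin r // k ≠ j} → ℂ) => p.1 l) := contDiff_pi.1 contDiff_fst l
    exact h1.smul h2
  · simp only [depMap, dif_neg hk]
    exact contDiff_pi.1 contDiff_fst (⟨k, hk⟩ : {k : Fin r // k ≠ j})

theorem finrank_stiefelAmbient : finrank ℝ (stiefelAmbient m r) = r * (2 * m) := by
  have hEm : finrank ℝ (EuclideanSpace ℂ (Fin m)) = 2 * m := by
    rw [← Module.finrank_mul_finrank ℝ ℂ (EuclideanSpace ℂ (Fin m)),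
      Complex.finrank_real_complex, finrank_euclideanSpace_fin]
  rw [finrank_pi_fintype, Finset.sum_congr rfl fun x _ => hEm, Finset.sum_const,
    Finset.card_univ, Fintype.card_fin, smul_eq_mul]

theorem finrank_depParam (j : Fin r) :
    finrank ℝ (({k : Fin r // k ≠ j} → EuclideanSpace ℂ (Fin m))
      × ({k : Fin r // k ≠ j} → ℂ)) = (r - 1) * (2 * m) + (r - 1) * 2 := by
  classical
  have hcard : Fintype.card {k : Fin r // k ≠ j} = r - 1 := by
    simp [Fintype.card_subtype_compl, Fintype.card_fin]
  have hEm : finrank ℝ (EuclideanSpace ℂ (Fin m)) = 2 * m := by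
    rw [← Module.finrank_mul_finrank ℝ ℂ (EuclideanSpace ℂ (Fin m)),
      Complex.finrank_real_complex, finrank_euclideanSpace_fin]
  rw [Module.finrank_prod, finrank_pi_fintype, finrank_pi_fintype]
  simp only [hEm, Complex.finrank_real_complex, Finset.sum_const, Finset.card_univ, hcard,
    smul_eq_mul]

theorem dim_lt_aux {m r i : ℕ} (hr : 1 ≤ r) (hrm : r ≤ m) (hi : i ≤ 2 * (m - r)) :
    (r - 1) * (2 * m) + (r - 1) * 2 + (i + 1) < r * (2 * m) := by
  obtain ⟨a, rfl⟩ : ∃ a, r = a + 1 := ⟨r - 1, (Nat.succ_pred_eq_of_pos hr).symm⟩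
  simp only [Nat.add_sub_cancel]
  have h2 : a * 2 + (i + 1) < 2 * m := by omega
  calc a * (2 * m) + a * 2 + (i + 1) = a * (2 * m) + (a * 2 + (i + 1)) := by ring
    _ < a * (2 * m) + 2 * m := Nat.add_lt_add_left h2 _
    _ = (a + 1) * (2 * m) := by ring

theorem exists_good_translate {m r : ℕ} (i : ℕ) (hr : 1 ≤ r) (hrm : r ≤ m)
    (hi : i ≤ 2 * (m - r))
    {G : (Fin i → ℝ) × ℝ → stiefelAmbient m r} {LG : ℝ≥0} (hG : LipschitzWith LG G)
    {ε : ℝ} (hε : 0 < ε) :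
    ∃ w : stiefelAmbient m r, ‖w‖ < ε ∧ ∀ (j : Fin r) p z, G z + w ≠ depMap m r j p := by
  classical
  set Ψ : (j : Fin r) →
      ((({k : Fin r // k ≠ j} → EuclideanSpace ℂ (Fin m)) × ({k : Fin r // k ≠ j} → ℂ))
        × ((Fin i → ℝ) × ℝ)) → stiefelAmbient m r :=
    fun j q => depMap m r j q.1 - G q.2 with hΨ
  set B : Set (stiefelAmbient m r) := ⋃ j : Fin r, range (Ψ j) with hBdef
  have hdim : ∀ j : Fin r, dimH (range (Ψ j)) ≤ ((r - 1) * (2 * m) + (r - 1) * 2 + (i + 1) : ℕ) := by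
    intro j
    have hloc : ∀ x ∈ (univ : Set _), ∃ (C : NNReal) (t : Set _), t ∈ 𝓝[univ] x ∧ LipschitzOnWith C (Ψ j) t := by
      intro x _
      obtain ⟨K, t, ht, hK⟩ := ((contDiff_depMap m r j).contDiffAt (x := x.1)).exists_lipschitzOnWith
      refine ⟨K + LG, (t ×ˢ univ), mem_nhdsWithin_of_mem_nhds (prod_mem_nhds ht Filter.univ_mem), ?_⟩
      rw [lipschitzOnWith_iff_dist_le_mul]
      rintro ⟨p₁, z₁⟩ ⟨hp₁, -⟩ ⟨p₂, z₂⟩ ⟨hp₂, -⟩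
      have h1 : dist (Ψ j (p₁, z₁)) (Ψ j (p₂, z₂))
          ≤ dist (depMap m r j p₁) (depMap m r j p₂) + dist (G z₁) (G z₂) :=
        dist_sub_sub_le _ _ _ _
      have h2 : dist (depMap m r j p₁) (depMap m r j p₂) ≤ K * dist p₁ p₂ :=
        (lipschitzOnWith_iff_dist_le_mul.1 hK) p₁ hp₁ p₂ hp₂
      have h3 : dist (G z₁) (G z₂) ≤ LG * dist z₁ z₂ := hG.dist_le_mul z₁ z₂
      have hd1 : dist p₁ p₂ ≤ dist ((p₁, z₁)) ((p₂, z₂)) := by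
        rw [Prod.dist_eq]; exact le_max_left _ _
      have hd2 : dist z₁ z₂ ≤ dist ((p₁, z₁)) ((p₂, z₂)) := by
        rw [Prod.dist_eq]; exact le_max_right _ _
      calc dist (Ψ j (p₁, z₁)) (Ψ j (p₂, z₂))
          ≤ K * dist p₁ p₂ + LG * dist z₁ z₂ := h1.trans (add_le_add h2 h3)
        _ ≤ K * dist ((p₁, z₁)) ((p₂, z₂)) + LG * dist ((p₁, z₁)) ((p₂, z₂)) :=
            add_le_add (mul_le_mul_of_nonneg_left hd1 K.coe_nonneg)
              (mul_le_mul_of_nonneg_left hd2 LG.coe_nonneg)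
        _ = ((K + LG : ℝ≥0) : ℝ) * dist ((p₁, z₁)) ((p₂, z₂)) := by push_cast; ring
    have := dimH_image_le_of_locally_lipschitzOn (f := Ψ j) (s := univ) hloc
    rw [image_univ] at this
    refine this.trans ?_
    rw [Real.dimH_univ_eq_finrank]
    rw [Module.finrank_prod, finrank_depParam, Module.finrank_prod, Module.finrank_fin_fun,
      Module.finrank_self]
  have hdimB : dimH B < finrank ℝ (stiefelAmbient m r) := by
    rw [hBdef, dimH_iUnion]
    apply lt_of_le_of_lt (iSup_le fun j => hdim j)
    rw [finrank_stiefelAmbient]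
    exact_mod_cast dim_lt_aux hr hrm hi
  have hdense : Dense Bᶜ := dense_compl_of_dimH_lt_finrank hdimB
  obtain ⟨w, hwB, hwball⟩ := hdense.exists_mem_open isOpen_ball ⟨0, mem_ball_self hε⟩
  refine ⟨w, by simpa using hwball, ?_⟩
  intro j p z hEq
  apply hwB
  rw [hBdef]
  exact mem_iUnion.2 ⟨j, ⟨(p, z), by rw [hΨ]; simp [← hEq]⟩⟩

end Stiefel

section MainArg

open Topology.Homotopy GenLoop

theorem exists_pos_le_infDist {Y : Type*} [TopologicalSpace Y] [CompactSpace Y] [Nonempty Y]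
    {E' : Type*} [MetricSpace E'] {u : Y → E'} (hu : Continuous u) {S : Set E'}
    (hS : IsClosed S) (hSne : S.Nonempty) (hdisj : ∀ y, u y ∉ S) :
    ∃ δ > 0, ∀ y, δ ≤ infDist (u y) S := by
  obtain ⟨y₀, -, hy₀⟩ := isCompact_univ.exists_isMinOn univ_nonempty
    (((continuous_infDist_pt S).comp hu).continuousOn)
  exact ⟨infDist (u y₀) S, (hS.notMem_iff_infDist_pos hSne).1 (hdisj y₀),
    fun y => isMinOn_iff.1 hy₀ y (mem_univ y)⟩

set_option maxHeartbeats 2000000 in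
theorem genLoop_homotopic_const (m r i : ℕ) (hr : 1 ≤ r) (hrm : r ≤ m) (hi : i ≤ 2 * (m - r))
    (pt : ↥(complexStiefel m r)) (γ : Ω^ (Fin i) ↥(complexStiefel m r) pt) :
    GenLoop.Homotopic γ GenLoop.const := by
  classical
  obtain ⟨e, heV⟩ := pt
  set V : Set (stiefelAmbient m r) := complexStiefel m r with hV
  have hVopen : IsOpen V := isOpen_setOf_linearIndependent (𝕜 := ℂ)
  have hVcc : IsClosed Vᶜ := hVopen.isClosed_compl
  have hVcne : Vᶜ.Nonempty := ⟨0, fun hmem => (hmem.ne_zero ⟨0, hr⟩) rfl⟩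
  have hmem : ∀ z w : stiefelAmbient m r, dist z w < infDist z Vᶜ → w ∈ V := by
    intro z w hzw
    by_contra hw
    exact absurd (infDist_le_dist_of_mem (mem_compl hw)) (not_le.2 hzw)
  -- the underlying map of γ
  set f : (I^ Fin i) → stiefelAmbient m r := fun x => (γ x : stiefelAmbient m r) with hf
  have hfc : Continuous f := continuous_subtype_val.comp γ.1.continuous
  have hfV : ∀ x, f x ∈ V := fun x => (γ x).2
  have hγbd : ∀ x ∈ Cube.boundary (Fin i), f x = e := fun x hx =>
    congrArg Subtype.val (γ.2 x hx)
  obtain ⟨δ₀, hδ₀, hδ₀le⟩ := exists_pos_le_infDist hfc hVcc hVcne (fun x h => h (hfV x))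
  set fCM : C(I^ Fin i, stiefelAmbient m r) := ⟨f, hfc⟩ with hfCM
  obtain ⟨h, ⟨Lh, hLh⟩, hhf⟩ := exists_lipschitz_approx fCM (show (0:ℝ) < δ₀/4 by positivity)
  simp only [hfCM, ContinuousMap.coe_mk] at hhf
  obtain ⟨η, hη, hηf⟩ := Metric.uniformContinuous_iff.1
    (CompactSpace.uniformContinuous_of_continuous hfc) (δ₀/4) (by positivity)
  -- boundary cutoff
  obtain ⟨φ, Lφ, hφL, hφ0, hφ1, hφbd, hφnear⟩ :
      ∃ (φ : (I^ Fin i) → ℝ) (Lφ : ℝ≥0), LipschitzWith Lφ φ ∧ (∀ x, 0 ≤ φ x) ∧ (∀ x, φ x ≤ 1)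
        ∧ (∀ x ∈ Cube.boundary (Fin i), φ x = 1) ∧ (∀ x, 0 < φ x → dist (f x) e ≤ δ₀ / 4) := by
    rcases eq_empty_or_nonempty (Cube.boundary (Fin i)) with hBe | hBne
    · exact ⟨fun _ => 0, 0, LipschitzWith.const' 0, fun _ => le_rfl, fun _ => zero_le_one,
        fun x hx => absurd hx (by simp [hBe]), fun x hx => absurd hx (lt_irrefl 0)⟩
    · have haff : LipschitzWith (Real.toNNReal η⁻¹) (fun t : ℝ => 1 - t / η) := by
        apply LipschitzWith.of_dist_le_mul
        intro a b
        rw [Real.coe_toNNReal _ (by positivity), Real.dist_eq, Real.dist_eq]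
        have h1 : (1 - a / η) - (1 - b / η) = -((a - b) / η) := by ring
        rw [h1, abs_neg, abs_div, abs_of_pos hη, div_eq_inv_mul]
      refine ⟨fun x => max (1 - infDist x (Cube.boundary (Fin i)) / η) 0,
        Real.toNNReal η⁻¹ * 1, (haff.comp (lipschitz_infDist_pt _)).max_const 0,
        fun x => le_max_right _ _, fun x => ?_, fun x hx => ?_, fun x hx => ?_⟩
      · show max (1 - infDist x (Cube.boundary (Fin i)) / η) 0 ≤ 1
        apply max_le _ zero_le_one
        have h2 : 0 ≤ infDist x (Cube.boundary (Fin i)) / η := by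
          have := infDist_nonneg (s := Cube.boundary (Fin i)) (x := x)
          positivity
        linarith
      · show max (1 - infDist x (Cube.boundary (Fin i)) / η) 0 = 1
        rw [infDist_zero_of_mem hx]
        simp
      · replace hx : 0 < max (1 - infDist x (Cube.boundary (Fin i)) / η) 0 := hx
        have h2 : 0 < 1 - infDist x (Cube.boundary (Fin i)) / η := by
          by_contra h3
          rw [max_eq_right (not_lt.1 h3)] at hx
          exact lt_irrefl 0 hx
        have h4 : infDist x (Cube.boundary (Fin i)) < η := by
          by_contra h5
          have := (one_le_div hη).2 (not_lt.1 h5)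
          linarith
        obtain ⟨y, hy, hxy⟩ := (infDist_lt_iff hBne).1 h4
        have h6 := hηf hxy
        rw [hγbd y hy] at h6
        exact h6.le
  -- the Lipschitz replacement g of f
  set g : (I^ Fin i) → stiefelAmbient m r := fun x => h x + φ x • (e - h x) with hg
  have hMu : ∀ x, ‖e - h x‖ ≤ ‖e‖ + ‖fCM‖ + δ₀ / 4 := by
    intro x
    calc ‖e - h x‖ = ‖(e - f x) + (f x - h x)‖ := by abel_nf
      _ ≤ ‖e - f x‖ + ‖f x - h x‖ := norm_add_le _ _
      _ ≤ (‖e‖ + ‖f x‖) + δ₀ / 4 := add_le_add (norm_sub_le _ _) (hhf x)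
      _ ≤ ‖e‖ + ‖fCM‖ + δ₀ / 4 := by
          have h7 := fCM.norm_coe_le_norm x
          simp only [hfCM, ContinuousMap.coe_mk] at h7
          linarith
  have hφabs : ∀ x, |φ x| ≤ 1 := fun x => by
    rw [abs_of_nonneg (hφ0 x)]; exact hφ1 x
  obtain ⟨Lg, hLg⟩ : ∃ Lg : ℝ≥0, LipschitzWith Lg g :=
    ⟨_, hLh.add (lipschitzWith_smul_of_bound hφL ((LipschitzWith.const e).sub hLh)
      hφabs hMu)⟩
  have hgf : ∀ x, dist (f x) (g x) ≤ 3 / 4 * δ₀ := by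
    intro x
    have hfg : f x - g x = (f x - h x) - φ x • (e - h x) := by simp only [hg]; abel
    rw [dist_eq_norm, hfg]
    rcases eq_or_lt_of_le (hφ0 x) with h0 | h0
    · rw [← h0, zero_smul, sub_zero]
      have := hhf x
      linarith
    · have hEb : ‖e - h x‖ ≤ δ₀ / 2 := by
        have h1 : ‖e - f x‖ ≤ δ₀ / 4 := by
          rw [← dist_eq_norm, dist_comm]
          exact hφnear x h0
        have h2 := hhf x
        calc ‖e - h x‖ = ‖(e - f x) + (f x - h x)‖ := by abel_nf
          _ ≤ ‖e - f x‖ + ‖f x - h x‖ := norm_add_le _ _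
          _ ≤ δ₀ / 4 + δ₀ / 4 := add_le_add h1 h2
          _ = δ₀ / 2 := by ring
      calc ‖(f x - h x) - φ x • (e - h x)‖ ≤ ‖f x - h x‖ + ‖φ x • (e - h x)‖ := norm_sub_le _ _
        _ ≤ δ₀ / 4 + |φ x| * ‖e - h x‖ := by
            rw [norm_smul, Real.norm_eq_abs]
            exact add_le_add_left (hhf x) _
        _ ≤ δ₀ / 4 + 1 * (δ₀ / 2) := by
            have := mul_le_mul (hφabs x) hEb (norm_nonneg _) zero_le_one
            linarith
        _ = 3 / 4 * δ₀ := by ring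
  have hdistlt : ∀ x, dist (f x) (g x) < infDist (f x) Vᶜ := fun x =>
    lt_of_le_of_lt (hgf x) (lt_of_lt_of_le (by linarith) (hδ₀le x))
  have hgV : ∀ x, g x ∈ V := fun x => hmem (f x) (g x) (hdistlt x)
  have hgbd : ∀ x ∈ Cube.boundary (Fin i), g x = e := by
    intro x hx
    rw [hg]
    simp only [hφbd x hx, one_smul]
    abel
  -- the Lipschitz generalized loop γ₁
  set γ₁ : Ω^ (Fin i) ↥(complexStiefel m r) ⟨e, heV⟩ :=
    ⟨⟨fun x => ⟨g x, hgV x⟩, (hLg.continuous).subtype_mk _⟩,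
      fun y hy => Subtype.ext (by simp only [ContinuousMap.coe_mk]; exact hgbd y hy)⟩ with hγ₁
  have hγ₁x : ∀ x, (γ₁ x : stiefelAmbient m r) = g x := fun _ => rfl
  have hγx : ∀ x, (γ x : stiefelAmbient m r) = f x := fun _ => rfl
  -- straight-line homotopy from γ to γ₁
  have hA : ∀ (t : I) (x : I^ Fin i), f x + (t : ℝ) • (g x - f x) ∈ V := by
    intro t x
    apply hmem (f x)
    have h1 : f x - (f x + (t : ℝ) • (g x - f x)) = -((t : ℝ) • (g x - f x)) := by abel
    rw [dist_eq_norm, h1, norm_neg, norm_smul, Real.norm_eq_abs, abs_of_nonneg t.2.1]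
    calc (t : ℝ) * ‖g x - f x‖ ≤ 1 * ‖g x - f x‖ :=
          mul_le_mul_of_nonneg_right t.2.2 (norm_nonneg _)
      _ = dist (f x) (g x) := by rw [one_mul, dist_eq_norm]; rw [← norm_neg]; congr 1; abel
      _ < infDist (f x) Vᶜ := hdistlt x
  have H1 : GenLoop.Homotopic γ γ₁ := by
    refine ⟨{ toFun := fun q => ⟨f q.2 + (q.1 : ℝ) • (g q.2 - f q.2), hA q.1 q.2⟩
              continuous_toFun := ?_
              map_zero_left := ?_
              map_one_left := ?_
              prop' := ?_ }⟩
    · apply Continuous.subtype_mk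
      exact (hfc.comp continuous_snd).add
        (((continuous_subtype_val.comp continuous_fst).smul
          ((hLg.continuous.comp continuous_snd).sub (hfc.comp continuous_snd))))
    · intro x
      apply Subtype.ext
      show f x + ((0 : I) : ℝ) • (g x - f x) = f x
      simp
    · intro x
      apply Subtype.ext
      show f x + ((1 : I) : ℝ) • (g x - f x) = g x
      simp
    · intro t y hy
      apply Subtype.ext
      show f y + (t : ℝ) • (g y - f y) = f y
      rw [hgbd y hy, ← hγbd y hy]
      simp
  -- step 2: contract γ₁
  have hgc : Continuous g := hLg.continuous
  obtain ⟨δ₁, hδ₁, hδ₁le⟩ := exists_pos_le_infDist hgc hVcc hVcne (fun x hx => hx (hgV x))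
  have hδe : 0 < infDist e Vᶜ := (hVcc.notMem_iff_infDist_pos hVcne).1 (fun hc => hc heV)
  set δ : ℝ := min δ₁ (infDist e Vᶜ) with hδdef
  have hδ : 0 < δ := lt_min hδ₁ hδe
  -- clamped Lipschitz homotopy defined on all of ℝ^i × ℝ
  set proj : (Fin i → ℝ) → (I^ Fin i) := fun z j => projIcc 0 1 zero_le_one (z j) with hprojdef
  have hprojL : LipschitzWith 1 proj := by
    apply LipschitzWith.of_dist_le_mul
    intro z w
    rw [NNReal.coe_one, one_mul, dist_pi_le_iff dist_nonneg]
    intro j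
    calc dist (proj z j) (proj w j) ≤ dist (z j) (w j) := by
          simpa using (LipschitzWith.projIcc (zero_le_one (α := ℝ))).dist_le_mul (z j) (w j)
      _ ≤ dist z w := dist_le_pi_dist z w j
  have hτL : LipschitzWith 1 (fun s : ℝ => ((projIcc 0 1 zero_le_one s : I) : ℝ)) := by
    apply LipschitzWith.of_dist_le_mul
    intro a b
    rw [NNReal.coe_one, one_mul]
    have h1 := (LipschitzWith.projIcc (zero_le_one (α := ℝ))).dist_le_mul a b
    rw [NNReal.coe_one, one_mul] at h1
    simpa [Subtype.dist_eq] using h1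
  set G : (Fin i → ℝ) × ℝ → stiefelAmbient m r :=
    fun z => g (proj z.1) + ((projIcc 0 1 zero_le_one z.2 : I) : ℝ) • (e - g (proj z.1)) with hG
  set gCM : C(I^ Fin i, stiefelAmbient m r) := ⟨g, hgc⟩ with hgCM
  have hMg : ∀ y, ‖e - g y‖ ≤ ‖e‖ + ‖gCM‖ := by
    intro y
    refine (norm_sub_le _ _).trans ?_
    have h7 := gCM.norm_coe_le_norm y
    simp only [hgCM, ContinuousMap.coe_mk] at h7
    linarith
  have h1L : LipschitzWith (Lg * 1 * 1) (fun z : (Fin i → ℝ) × ℝ => g (proj z.1)) :=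
    (hLg.comp hprojL).comp LipschitzWith.prod_fst
  have hscL : LipschitzWith (1 * 1)
      (fun z : (Fin i → ℝ) × ℝ => ((projIcc 0 1 zero_le_one z.2 : I) : ℝ)) :=
    hτL.comp LipschitzWith.prod_snd
  have hsc_abs : ∀ z : (Fin i → ℝ) × ℝ, |((projIcc 0 1 zero_le_one z.2 : I) : ℝ)| ≤ 1 := by
    intro z
    rw [abs_of_nonneg (projIcc 0 1 zero_le_one z.2).2.1]
    exact (projIcc 0 1 zero_le_one z.2).2.2
  have hGL : LipschitzWith _ G :=
    h1L.add (lipschitzWith_smul_of_bound hscL ((LipschitzWith.const e).sub h1L)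
      hsc_abs (fun z => hMg _))
  obtain ⟨w, hwn, hw⟩ := exists_good_translate i hr hrm hi hGL (show (0:ℝ) < δ/2 by positivity)
  -- the straight-line contraction and its perturbation
  set F : (I^ Fin i) × I → stiefelAmbient m r := fun q => g q.1 + (q.2 : ℝ) • (e - g q.1) with hF
  have hFG : ∀ q : (I^ Fin i) × I, F q = G (fun j => (q.1 j : ℝ), (q.2 : ℝ)) := by
    intro q
    rw [hF, hG]
    have h1 : proj (fun j => (q.1 j : ℝ)) = q.1 := by
      funext j
      simp [hprojdef, projIcc_val]
    have h2 : (projIcc 0 1 zero_le_one ((q.2 : ℝ)) : I) = q.2 := projIcc_val zero_le_one q.2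
    simp only [h1, h2]
  have hFcont : Continuous F :=
    (hgc.comp continuous_fst).add ((continuous_subtype_val.comp continuous_snd).smul
      (continuous_const.sub (hgc.comp continuous_fst)))
  set dF : (I^ Fin i) × I → ℝ := fun q => infDist (F q) Vᶜ with hdF
  have hdFc : Continuous dF := (continuous_infDist_pt _).comp hFcont
  set ρ : (I^ Fin i) × I → ℝ := fun q => min (max (2 - (2/δ) * dF q) 0) 1 with hρ
  have hρc : Continuous ρ :=
    ((continuous_const.sub (continuous_const.mul hdFc)).max continuous_const).min
      continuous_const
  have hρ0 : ∀ q, 0 ≤ ρ q := fun q => le_min (le_max_right _ _) zero_le_one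
  have hρle1 : ∀ q, ρ q ≤ 1 := fun q => min_le_right _ _
  have hρeq0 : ∀ q, δ ≤ dF q → ρ q = 0 := by
    intro q hq
    have h1 : 2 ≤ (2/δ) * dF q := by
      have h2 : (2/δ) * δ ≤ (2/δ) * dF q := mul_le_mul_of_nonneg_left hq (by positivity)
      have h3 : (2/δ) * δ = 2 := by field_simp
      linarith
    have h4 : 2 - (2/δ) * dF q ≤ 0 := by linarith
    rw [hρ]
    simp only
    rw [max_eq_right h4, min_eq_left zero_le_one]
  have hρlt1 : ∀ q, ρ q < 1 → δ/2 < dF q := by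
    intro q hq
    by_contra hc
    have h2 : (2/δ) * dF q ≤ 1 := by
      calc (2/δ) * dF q ≤ (2/δ) * (δ/2) :=
            mul_le_mul_of_nonneg_left (not_lt.1 hc) (by positivity)
        _ = 1 := by field_simp
    have h1 : (1:ℝ) ≤ 2 - (2/δ) * dF q := by linarith
    have h3 : ρ q = 1 := by
      rw [hρ]
      simp only
      rw [min_eq_right (le_max_of_le_left h1)]
    rw [h3] at hq
    exact lt_irrefl 1 hq
  set Hmap : (I^ Fin i) × I → stiefelAmbient m r := fun q => F q + ρ q • w with hHmap
  have hHc : Continuous Hmap := hFcont.add (hρc.smul continuous_const)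
  have hHV : ∀ q, Hmap q ∈ V := by
    intro q
    rcases lt_or_ge (ρ q) 1 with hlt | hge
    · apply hmem (F q)
      have h1 : F q - Hmap q = -(ρ q • w) := by simp only [hHmap]; abel
      rw [dist_eq_norm, h1, norm_neg, norm_smul, Real.norm_eq_abs, abs_of_nonneg (hρ0 q)]
      calc ρ q * ‖w‖ ≤ 1 * ‖w‖ := mul_le_mul_of_nonneg_right (hρle1 q) (norm_nonneg _)
        _ = ‖w‖ := one_mul _
        _ < δ/2 := hwn
        _ < dF q := hρlt1 q hlt
    · have hρq : ρ q = 1 := le_antisymm (hρle1 q) hge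
      by_contra hc
      obtain ⟨j, p, hjp⟩ := exists_depMap_eq m r (v := Hmap q) hc
      have h5 : G (fun j' => (q.1 j' : ℝ), (q.2 : ℝ)) + w = depMap m r j p := by
        rw [← hFG q, ← hjp, hHmap]
        simp [hρq]
      exact hw j p _ h5
  have hHbd0 : ∀ x, Hmap (x, (0:I)) = g x := by
    intro x
    have hF0 : F (x, (0:I)) = g x := by rw [hF]; simp
    have h6 : δ ≤ dF (x, (0:I)) := by
      rw [hdF]
      simp only [hF0]
      exact le_trans (min_le_left _ _) (hδ₁le x)
    rw [hHmap]
    simp only [hρeq0 _ h6, zero_smul, add_zero, hF0]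
  have hHbd1 : ∀ x, Hmap (x, (1:I)) = e := by
    intro x
    have hF1 : F (x, (1:I)) = e := by rw [hF]; simp
    have h6 : δ ≤ dF (x, (1:I)) := by
      rw [hdF]
      simp only [hF1]
      exact min_le_right _ _
    rw [hHmap]
    simp only [hρeq0 _ h6, zero_smul, add_zero, hF1]
  have hHbdS : ∀ (t : I), ∀ y ∈ Cube.boundary (Fin i), Hmap (y, t) = e := by
    intro t y hy
    have hFy : F (y, t) = e := by rw [hF]; simp [hgbd y hy]
    have h6 : δ ≤ dF (y, t) := by
      rw [hdF]
      simp only [hFy]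
      exact min_le_right _ _
    rw [hHmap]
    simp only [hρeq0 _ h6, zero_smul, add_zero, hFy]
  have H2 : GenLoop.Homotopic γ₁ GenLoop.const := by
    refine ⟨{ toFun := fun q => ⟨Hmap (q.2, q.1), hHV _⟩
              continuous_toFun := ?_
              map_zero_left := ?_
              map_one_left := ?_
              prop' := ?_ }⟩
    · exact (hHc.comp (continuous_snd.prodMk continuous_fst)).subtype_mk _
    · intro x
      apply Subtype.ext
      show Hmap (x, (0 : I)) = (γ₁ x : stiefelAmbient m r)
      rw [hHbd0 x, hγ₁x]
    · intro x
      apply Subtype.ext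
      show Hmap (x, (1 : I)) = e
      exact hHbd1 x
    · intro t y hy
      apply Subtype.ext
      show Hmap (y, t) = (γ₁ y : stiefelAmbient m r)
      rw [hHbdS t y hy, hγ₁x, hgbd y hy]
  exact H1.trans H2

end MainArg

/-- For `1 ≤ r ≤ m` and `i ≤ 2(m − r)`, the homotopy group
`π_i(V_r(ℂ^m), e)` based at the standard frame is trivial. -/
theorem homotopyGroup_complexStiefel_subsingleton
    (m r : ℕ) (hr : 1 ≤ r) (hrm : r ≤ m) (i : ℕ) (hi : i ≤ 2 * (m - r)) :
    Subsingleton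
      (π_ i (complexStiefel m r)
        ⟨stdFrame m r hrm, stdFrame_mem m r hrm⟩) := by
  have key := genLoop_homotopic_const m r i hr hrm hi ⟨stdFrame m r hrm, stdFrame_mem m r hrm⟩
  constructor
  intro a b
  refine @Quotient.inductionOn₂ _ _
    (GenLoop.Homotopic.setoid _ _) (GenLoop.Homotopic.setoid _ _)
    (fun a b => a = b) a b fun x y => Quotient.sound ((key x).trans (key y).symm)
end

section
/- Let 1 ≤ r ≤ m and let k be a natural number with 1 ≤ k and k < 2(m − r + 1). Then every continuous map f from the unit sphere {x ∈ EuclideanSpace ℝ (Fin k) : ‖x‖ = 1} to V_r(ℂ^m) admits a continuous extension F defined on the closed unit ball {x ∈ EuclideanSpace ℝ (Fin k) : ‖x‖ ≤ 1} with values in V_r(ℂ^m) such that F restricted to the sphere equals f. -/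
open scoped Topology

open Set Metric Finset Module Topology
open scoped ENNReal NNReal


private lemma aux_dep_smul {n m : ℕ} (s : ℝ) {v : Fin n → EuclideanSpace ℂ (Fin m)}
    (hv : ¬ LinearIndependent ℂ v) : ¬ LinearIndependent ℂ (fun i => s • v i) := by
  obtain ⟨g, hg, j, hj⟩ := Fintype.not_linearIndependent_iff.1 hv
  refine Fintype.not_linearIndependent_iff.2 ⟨g, ?_, j, hj⟩
  have : ∑ i, g i • s • v i = s • ∑ i, g i • v i := by
    rw [Finset.smul_sum]; exact Finset.sum_congr rfl fun i _ => (smul_comm s (g i) (v i)).symm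
  rw [this, hg, smul_zero]

private lemma aux_smul_LI {n m : ℕ} {s : ℝ} (hs : s ≠ 0) {v : Fin n → EuclideanSpace ℂ (Fin m)}
    (hv : LinearIndependent ℂ v) : LinearIndependent ℂ (fun i => s • v i) := by
  by_contra h
  have := aux_dep_smul s⁻¹ h
  simp only [inv_smul_smul₀ hs] at this
  exact this hv

private lemma aux_exists_rep {r' m : ℕ} {v : Fin (r'+1) → EuclideanSpace ℂ (Fin m)}
    (hv : ¬ LinearIndependent ℂ v) :
    ∃ (j : Fin (r'+1)) (w : Fin r' → EuclideanSpace ℂ (Fin m)) (a : Fin r' → ℂ),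
      v = j.insertNth (∑ l, a l • w l) w := by
  obtain ⟨g, hg, j, hj⟩ := Fintype.not_linearIndependent_iff.1 hv
  refine ⟨j, fun l => v (j.succAbove l), fun l => -(g (j.succAbove l) / g j), ?_⟩
  have hsum : g j • v j + ∑ l, g (j.succAbove l) • v (j.succAbove l) = 0 := by
    rw [← Fin.sum_univ_succAbove (fun i => g i • v i) j]; exact hg
  have hvj : (∑ l, (-(g (j.succAbove l) / g j)) • (v (j.succAbove l))) = v j := by
    have h2 : ∑ l, (-(g (j.succAbove l) / g j)) • v (j.succAbove l)
        = (g j)⁻¹ • ∑ l, (-(g (j.succAbove l))) • v (j.succAbove l) := by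
      rw [Finset.smul_sum]
      refine Finset.sum_congr rfl fun l _ => ?_
      rw [smul_smul, div_eq_inv_mul]; ring_nf
    have h3 : ∑ l, (-(g (j.succAbove l))) • v (j.succAbove l) = g j • v j := by
      have h4 : ∑ l, g (j.succAbove l) • v (j.succAbove l) = -(g j • v j) :=
        eq_neg_of_add_eq_zero_right hsum
      calc ∑ l, (-(g (j.succAbove l))) • v (j.succAbove l)
          = -∑ l, g (j.succAbove l) • v (j.succAbove l) := by
            rw [← Finset.sum_neg_distrib]
            exact Finset.sum_congr rfl fun l _ => neg_smul _ _
        _ = g j • v j := by rw [h4, neg_neg]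
    rw [h2, h3, inv_smul_smul₀ hj]
  funext i
  refine Fin.succAboveCases j ?_ (fun l => ?_) i
  · rw [Fin.insertNth_apply_same]; exact hvj.symm
  · rw [Fin.insertNth_apply_succAbove]


private noncomputable def auxQ (m r k : ℕ) (T : Finset {x : EuclideanSpace ℝ (Fin k) // ‖x‖ = 1})
    (ρ : ℝ) (v : {x : EuclideanSpace ℝ (Fin k) // ‖x‖ = 1} → (Fin r → EuclideanSpace ℂ (Fin m)))
    (y : {x : EuclideanSpace ℝ (Fin k) // ‖x‖ = 1}) : Fin r → EuclideanSpace ℂ (Fin m) :=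
  ∑ t ∈ T, (max 0 (ρ - dist y t)) • v t

private noncomputable def auxG (m r k : ℕ) (T : Finset {x : EuclideanSpace ℝ (Fin k) // ‖x‖ = 1})
    (ρ : ℝ) (v : {x : EuclideanSpace ℝ (Fin k) // ‖x‖ = 1} → (Fin r → EuclideanSpace ℂ (Fin m)))
    (z : EuclideanSpace ℝ (Fin k)) : Fin r → EuclideanSpace ℂ (Fin m) :=
  ∑ t ∈ T, (max 0 (ρ * ‖z‖ - ‖z - ‖z‖ • t.1‖)) • v t

private lemma auxG_smul (m r k : ℕ) (T : Finset {x : EuclideanSpace ℝ (Fin k) // ‖x‖ = 1})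
    (ρ : ℝ) (v : {x : EuclideanSpace ℝ (Fin k) // ‖x‖ = 1} → (Fin r → EuclideanSpace ℂ (Fin m)))
    {c : ℝ} (hc : 0 ≤ c) (y : {x : EuclideanSpace ℝ (Fin k) // ‖x‖ = 1}) :
    auxG m r k T ρ v (c • y.1) = c • auxQ m r k T ρ v y := by
  unfold auxG auxQ
  rw [Finset.smul_sum]
  refine Finset.sum_congr rfl fun t _ => ?_
  have h1 : ‖c • y.1‖ = c := by
    rw [norm_smul, y.2, Real.norm_eq_abs, abs_of_nonneg hc, mul_one]
  have h2 : ‖c • y.1 - c • t.1‖ = c * ‖y.1 - t.1‖ := by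
    rw [← smul_sub, norm_smul, Real.norm_eq_abs, abs_of_nonneg hc]
  have h3 : dist y t = ‖y.1 - t.1‖ := by rw [Subtype.dist_eq, dist_eq_norm]
  rw [h1, h2, h3, smul_smul]
  congr 1
  rw [mul_max_of_nonneg _ _ hc, mul_zero, mul_sub, mul_comm ρ c]

private lemma auxG_zero (m r k : ℕ) (T : Finset {x : EuclideanSpace ℝ (Fin k) // ‖x‖ = 1})
    (ρ : ℝ) (v : {x : EuclideanSpace ℝ (Fin k) // ‖x‖ = 1} → (Fin r → EuclideanSpace ℂ (Fin m))) :
    auxG m r k T ρ v 0 = 0 := by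
  unfold auxG
  refine Finset.sum_eq_zero fun t _ => ?_
  simp

private lemma auxG_lipschitz (m r k : ℕ) (T : Finset {x : EuclideanSpace ℝ (Fin k) // ‖x‖ = 1})
    {ρ : ℝ} (hρ : 0 ≤ ρ)
    (v : {x : EuclideanSpace ℝ (Fin k) // ‖x‖ = 1} → (Fin r → EuclideanSpace ℂ (Fin m))) :
    ∃ K : NNReal, LipschitzWith K (auxG m r k T ρ v) := by
  set C : ℝ := (ρ + 2) * ∑ t ∈ T, ‖v t‖ with hC
  have hCnn : 0 ≤ C := by
    apply mul_nonneg (by linarith)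
    exact Finset.sum_nonneg fun t _ => norm_nonneg _
  refine ⟨C.toNNReal, LipschitzWith.of_dist_le_mul fun z z' => ?_⟩
  rw [Real.coe_toNNReal _ hCnn]
  have hterm : ∀ t : {x : EuclideanSpace ℝ (Fin k) // ‖x‖ = 1},
      |max 0 (ρ * ‖z‖ - ‖z - ‖z‖ • t.1‖) - max 0 (ρ * ‖z'‖ - ‖z' - ‖z'‖ • t.1‖)|
        ≤ (ρ + 2) * dist z z' := by
    intro t
    have h1 := abs_max_sub_max_le_abs (ρ * ‖z‖ - ‖z - ‖z‖ • t.1‖)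
        (ρ * ‖z'‖ - ‖z' - ‖z'‖ • t.1‖) 0
    rw [max_comm _ (0:ℝ), max_comm (ρ * ‖z'‖ - ‖z' - ‖z'‖ • t.1‖) (0:ℝ)] at h1
    refine h1.trans ?_
    have h2 : |(ρ * ‖z‖ - ‖z - ‖z‖ • t.1‖) - (ρ * ‖z'‖ - ‖z' - ‖z'‖ • t.1‖)|
        ≤ ρ * |‖z‖ - ‖z'‖| + |‖z - ‖z‖ • t.1‖ - ‖z' - ‖z'‖ • t.1‖| := by
      have : (ρ * ‖z‖ - ‖z - ‖z‖ • t.1‖) - (ρ * ‖z'‖ - ‖z' - ‖z'‖ • t.1‖)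
          = ρ * (‖z‖ - ‖z'‖) - (‖z - ‖z‖ • t.1‖ - ‖z' - ‖z'‖ • t.1‖) := by ring
      rw [this]
      refine (abs_sub _ _).trans ?_
      rw [abs_mul, abs_of_nonneg hρ]
    refine h2.trans ?_
    have h3 : |‖z‖ - ‖z'‖| ≤ dist z z' := by
      rw [dist_eq_norm]; exact abs_norm_sub_norm_le _ _
    have h4 : |‖z - ‖z‖ • t.1‖ - ‖z' - ‖z'‖ • t.1‖| ≤ 2 * dist z z' := by
      refine (abs_norm_sub_norm_le _ _).trans ?_
      have : (z - ‖z‖ • t.1) - (z' - ‖z'‖ • t.1) = (z - z') - (‖z‖ - ‖z'‖) • t.1 := by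
        rw [sub_smul]; abel
      rw [this]
      refine (norm_sub_le _ _).trans ?_
      rw [norm_smul, Real.norm_eq_abs, t.2, mul_one, dist_eq_norm]
      have := abs_norm_sub_norm_le z z'
      rw [← dist_eq_norm] at this ⊢
      linarith [this, dist_eq_norm z z' ▸ le_refl (dist z z')]
    nlinarith [dist_nonneg (x := z) (y := z'), h3, h4]
  calc dist (auxG m r k T ρ v z) (auxG m r k T ρ v z')
      = ‖∑ t ∈ T, ((max 0 (ρ * ‖z‖ - ‖z - ‖z‖ • t.1‖) - max 0 (ρ * ‖z'‖ - ‖z' - ‖z'‖ • t.1‖)) • v t)‖ := by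
        rw [dist_eq_norm]; unfold auxG
        rw [← Finset.sum_sub_distrib]
        congr 1
        exact Finset.sum_congr rfl fun t _ => (sub_smul _ _ _).symm
    _ ≤ ∑ t ∈ T, ‖(max 0 (ρ * ‖z‖ - ‖z - ‖z‖ • t.1‖) - max 0 (ρ * ‖z'‖ - ‖z' - ‖z'‖ • t.1‖)) • v t‖ :=
        norm_sum_le _ _
    _ ≤ ∑ t ∈ T, ((ρ + 2) * dist z z') * ‖v t‖ := by
        refine Finset.sum_le_sum fun t _ => ?_
        rw [norm_smul, Real.norm_eq_abs]
        exact mul_le_mul_of_nonneg_right (hterm t) (norm_nonneg _)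
    _ = C * dist z z' := by
        rw [← Finset.mul_sum, hC]; ring


private noncomputable def auxPsi (m r' : ℕ) (j : Fin (r'+1))
    (p : (Fin r' → EuclideanSpace ℂ (Fin m)) × (Fin r' → ℂ)) :
    Fin (r'+1) → EuclideanSpace ℂ (Fin m) :=
  j.insertNth (∑ l, p.2 l • p.1 l) p.1

private lemma auxPsi_contDiff (m r' : ℕ) (j : Fin (r'+1)) :
    ContDiff ℝ 1 (auxPsi m r' j) := by
  rw [contDiff_pi]
  intro i
  refine Fin.succAboveCases j ?_ (fun l => ?_) i
  · simp only [auxPsi, Fin.insertNth_apply_same]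
    refine ContDiff.sum fun l _ => ?_
    have h1 : ContDiff ℝ 1 (fun p : (Fin r' → EuclideanSpace ℂ (Fin m)) × (Fin r' → ℂ) => p.2 l) :=
      (contDiff_pi.1 contDiff_snd) l
    have h2 : ContDiff ℝ 1 (fun p : (Fin r' → EuclideanSpace ℂ (Fin m)) × (Fin r' → ℂ) => p.1 l) :=
      (contDiff_pi.1 contDiff_fst) l
    exact (isBoundedBilinearMap_smul.contDiff).comp (h1.prodMk h2)
  · simp only [auxPsi, Fin.insertNth_apply_succAbove]
    exact (contDiff_pi.1 contDiff_fst) l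

private lemma aux_lipschitzOnWith_sub {α F : Type*} [PseudoMetricSpace α] [NormedAddCommGroup F]
    {K1 K2 : NNReal} {f g : α → F} {s : Set α} (hf : LipschitzOnWith K1 f s)
    (hg : LipschitzOnWith K2 g s) : LipschitzOnWith (K1 + K2) (fun x => f x - g x) s := by
  rw [lipschitzOnWith_iff_dist_le_mul] at hf hg ⊢
  intro x hx y hy
  calc dist (f x - g x) (f y - g y) ≤ dist (f x) (f y) + dist (g x) (g y) := dist_sub_sub_le _ _ _ _
    _ ≤ K1 * dist x y + K2 * dist x y := add_le_add (hf x hx y hy) (hg x hx y hy)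
    _ = (K1 + K2 : NNReal) * dist x y := by push_cast; ring

private lemma aux_exists_c (m r' k : ℕ) (hrm : r' + 1 ≤ m) (hkobs : k < 2*(m - (r'+1) + 1))
    (G : EuclideanSpace ℝ (Fin k) → (Fin (r'+1) → EuclideanSpace ℂ (Fin m))) (KG : NNReal)
    (hG : LipschitzWith KG G) :
    ∃ c : Fin (r'+1) → EuclideanSpace ℂ (Fin m),
      ∀ (j : Fin (r'+1)) (w : Fin r' → EuclideanSpace ℂ (Fin m)) (a : Fin r' → ℂ)
        (z : EuclideanSpace ℝ (Fin k)), c ≠ auxPsi m r' j (w, a) - G z := by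
  set Φ :=
    fun (j : Fin (r'+1)) (p : ((Fin r' → EuclideanSpace ℂ (Fin m)) × (Fin r' → ℂ)) × EuclideanSpace ℝ (Fin k)) => auxPsi m r' j p.1 - G p.2 with hΦ
  have hloc : ∀ j, ∀ x ∈ (univ : Set (((Fin r' → EuclideanSpace ℂ (Fin m)) × (Fin r' → ℂ)) × EuclideanSpace ℝ (Fin k))), ∃ C : NNReal, ∃ t ∈ 𝓝[univ] x,
      LipschitzOnWith C (Φ j) t := by
    intro j x _
    obtain ⟨K1, t, ht, hl⟩ :=
      (((auxPsi_contDiff m r' j).comp contDiff_fst).contDiffAt (x := x)).exists_lipschitzOnWith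
    exact ⟨_, t, by rw [nhdsWithin_univ]; exact ht,
      aux_lipschitzOnWith_sub hl (hG.comp LipschitzWith.prod_snd).lipschitzOnWith⟩
  have hM0 : finrank ℝ (EuclideanSpace ℂ (Fin m)) = 2 * m := by
    rw [((WithLp.linearEquiv 2 ℂ (Fin m → ℂ)).restrictScalars ℝ).finrank_eq]
    simp [Module.finrank_pi_fintype, Complex.finrank_real_complex, Finset.sum_const, mul_comm]
  have hPfr : finrank ℝ (((Fin r' → EuclideanSpace ℂ (Fin m)) × (Fin r' → ℂ)) × EuclideanSpace ℝ (Fin k)) = r' * (2 * m) + r' * 2 + k := by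
    rw [Module.finrank_prod, Module.finrank_prod, Module.finrank_pi_fintype,
      Module.finrank_pi_fintype, finrank_euclideanSpace_fin]
    simp [hM0, Complex.finrank_real_complex, Finset.sum_const, Fintype.card_fin, mul_comm]
  have hMfr : finrank ℝ (Fin (r'+1) → EuclideanSpace ℂ (Fin m)) = (r'+1) * (2*m) := by
    rw [Module.finrank_pi_fintype]
    simp [hM0, Finset.sum_const, Fintype.card_fin, mul_comm]
  have harith : finrank ℝ (((Fin r' → EuclideanSpace ℂ (Fin m)) × (Fin r' → ℂ)) × EuclideanSpace ℝ (Fin k)) < finrank ℝ (Fin (r'+1) → EuclideanSpace ℂ (Fin m)) := by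
    rw [hPfr, hMfr]
    have h1 : (r'+1) * (2*m) = r' * (2*m) + 2*m := by ring
    rw [h1]
    have h2 : r' * 2 + k < 2 * m := by
      have : 2*(m - (r'+1) + 1) = 2*m - 2*r' := by omega
      omega
    omega
  have h5 : ∀ j, dimH (range (Φ j)) ≤ ((r' * (2 * m) + r' * 2 + k : ℕ) : ℝ≥0∞) := by
    intro j
    rw [← image_univ]
    refine (dimH_image_le_of_locally_lipschitzOn (hloc j)).trans ?_
    rw [Real.dimH_univ_eq_finrank (((Fin r' → EuclideanSpace ℂ (Fin m)) × (Fin r' → ℂ)) × EuclideanSpace ℝ (Fin k)), hPfr]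
  have hdim : dimH (⋃ j, range (Φ j)) < (finrank ℝ (Fin (r'+1) → EuclideanSpace ℂ (Fin m)) : ℝ≥0∞) := by
    rw [dimH_iUnion]
    refine lt_of_le_of_lt (iSup_le h5) ?_
    have := hPfr ▸ harith
    exact_mod_cast this
  obtain ⟨c, hc⟩ := (dense_compl_of_dimH_lt_finrank hdim).nonempty
  exact ⟨c, fun j w a z h => hc (mem_iUnion.2 ⟨j, ⟨((w, a), z), h.symm⟩⟩)⟩


set_option maxHeartbeats 2000000 in
/-- Below the obstruction dimension `2(m − r + 1)`, every continuous map from the unit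
sphere `S^{k−1}` to the complex Stiefel manifold `V_r(ℂ^m)` extends continuously to the
closed unit ball. -/
theorem extend_sphere_to_ball_complexStiefel
    (m r : ℕ) (hr : 1 ≤ r) (hrm : r ≤ m) (k : ℕ) (hk : 1 ≤ k)
    (hkobs : k < 2 * (m - r + 1))
    (f : {x : EuclideanSpace ℝ (Fin k) // ‖x‖ = 1} → ↥(complexStiefel m r))
    (hf : Continuous f) :
    ∃ F : {x : EuclideanSpace ℝ (Fin k) // ‖x‖ ≤ 1} → ↥(complexStiefel m r),
      Continuous F ∧
        ∀ x : {x : EuclideanSpace ℝ (Fin k) // ‖x‖ = 1},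
          F ⟨x.1, le_of_eq x.2⟩ = f x := by
  obtain ⟨r', rfl⟩ : ∃ r', r = r' + 1 := ⟨r - 1, (Nat.succ_pred_eq_of_pos hr).symm⟩
  classical
  -- the sphere is a compact space
  haveI hScomp : CompactSpace {x : EuclideanSpace ℝ (Fin k) // ‖x‖ = 1} := by
    have hset : {x : EuclideanSpace ℝ (Fin k) | ‖x‖ = 1} = sphere (0 : EuclideanSpace ℝ (Fin k)) 1 := by
      ext x; simp [mem_sphere_zero_iff_norm]
    have h1 : IsCompact {x : EuclideanSpace ℝ (Fin k) | ‖x‖ = 1} := by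
      rw [hset]; exact isCompact_sphere _ _
    exact isCompact_iff_compactSpace.mp h1
  set y₀ : {x : EuclideanSpace ℝ (Fin k) // ‖x‖ = 1} :=
    ⟨EuclideanSpace.single (⟨0, hk⟩ : Fin k) (1:ℝ), by
      rw [EuclideanSpace.norm_single]; norm_num⟩ with hy₀
  -- the Stiefel manifold is open; thickening of the image of f
  have hVopen : IsOpen (complexStiefel m (r'+1)) := isOpen_setOf_linearIndependent
  have hKcomp : IsCompact (range fun y : {x : EuclideanSpace ℝ (Fin k) // ‖x‖ = 1} => (f y).1) :=
    isCompact_range (continuous_subtype_val.comp hf)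
  have hKV : (range fun y : {x : EuclideanSpace ℝ (Fin k) // ‖x‖ = 1} => (f y).1) ⊆
      complexStiefel m (r'+1) := by rintro _ ⟨y, rfl⟩; exact (f y).2
  obtain ⟨δ, hδpos, hδ⟩ := hKcomp.exists_thickening_subset_open hVopen hKV
  -- uniform continuity of f
  obtain ⟨ρ, hρpos, hρ⟩ := Metric.uniformContinuous_iff.1
    (CompactSpace.uniformContinuous_of_continuous hf) (δ/2) (by linarith)
  -- a finite net on the sphere
  obtain ⟨Tset, hTsub, hTfin, hTcov⟩ := finite_cover_balls_of_compact
    (isCompact_univ : IsCompact (univ : Set {x : EuclideanSpace ℝ (Fin k) // ‖x‖ = 1}))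
    (by linarith : (0:ℝ) < ρ/2)
  set Tf := hTfin.toFinset with hTf
  have hnet : ∀ y : {x : EuclideanSpace ℝ (Fin k) // ‖x‖ = 1}, ∃ t ∈ Tf, dist y t < ρ/2 := by
    intro y
    have hy := hTcov (mem_univ y)
    simp only [mem_iUnion, exists_prop] at hy
    obtain ⟨t, ht, hyt⟩ := hy
    exact ⟨t, hTfin.mem_toFinset.2 ht, mem_ball.1 hyt⟩
  set Q := auxQ m (r'+1) k Tf ρ (fun y => (f y).1) with hQdef
  set G := auxG m (r'+1) k Tf ρ (fun y => (f y).1) with hGdef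
  set D : {x : EuclideanSpace ℝ (Fin k) // ‖x‖ = 1} → ℝ :=
    fun y => ∑ t ∈ Tf, max 0 (ρ - dist y t) with hDdef
  have hψnn : ∀ (t y : {x : EuclideanSpace ℝ (Fin k) // ‖x‖ = 1}),
      (0:ℝ) ≤ max 0 (ρ - dist y t) := fun t y => le_max_left _ _
  have hDlb : ∀ y, ρ/2 ≤ D y := by
    intro y
    obtain ⟨t₀, ht₀, hd⟩ := hnet y
    calc ρ/2 ≤ max 0 (ρ - dist y t₀) := le_max_of_le_right (by linarith)
      _ ≤ D y := Finset.single_le_sum (fun t _ => hψnn t y) ht₀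
  have hQD : ∀ y, ‖Q y - D y • (f y).1‖ ≤ D y * (δ/2) := by
    intro y
    have h1 : Q y - D y • (f y).1 = ∑ t ∈ Tf, (max 0 (ρ - dist y t)) • ((f t).1 - (f y).1) := by
      rw [hQdef]; unfold auxQ
      rw [hDdef, Finset.sum_smul, ← Finset.sum_sub_distrib]
      exact Finset.sum_congr rfl fun t _ => (smul_sub _ _ _).symm
    rw [h1, hDdef]
    refine (norm_sum_le _ _).trans ?_
    rw [Finset.sum_mul]
    refine Finset.sum_le_sum fun t _ => ?_
    rw [norm_smul, Real.norm_eq_abs, abs_of_nonneg (hψnn t y)]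
    rcases le_or_gt (max 0 (ρ - dist y t)) 0 with h | h
    · have h0 : max 0 (ρ - dist y t) = 0 := le_antisymm h (hψnn t y)
      rw [h0]; simp
    · have hd : dist y t < ρ := by
        by_contra hge; push_neg at hge
        rw [max_eq_left (by linarith)] at h; exact lt_irrefl _ h
      have hfd : ‖(f t).1 - (f y).1‖ ≤ δ/2 := by
        have h2 : dist (f t) (f y) < δ/2 := hρ (by rwa [dist_comm])
        rw [Subtype.dist_eq, dist_eq_norm] at h2
        exact h2.le
      exact mul_le_mul_of_nonneg_left hfd (hψnn t y)
  -- the key membership lemma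
  have hmem : ∀ (y : {x : EuclideanSpace ℝ (Fin k) // ‖x‖ = 1}) (a b : ℝ), 0 ≤ a → 0 ≤ b →
      0 < a + b → a • (f y).1 + b • Q y ∈ complexStiefel m (r'+1) := by
    intro y a b ha hb hab
    set lam := a + b * D y with hlam
    have hDy := hDlb y
    have hlampos : 0 < lam := by
      rcases eq_or_lt_of_le hb with hb0 | hbpos
      · rw [hlam, ← hb0]; simpa using (by linarith : 0 < a)
      · nlinarith
    have hbD : b * D y ≤ lam := by rw [hlam]; linarith
    set u := lam⁻¹ • (a • (f y).1 + b • Q y) with hu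
    have hkey : a • (f y).1 + b • Q y = lam • u := by rw [hu, smul_inv_smul₀ hlampos.ne']
    have hstep : a • (f y).1 + b • Q y - lam • (f y).1 = b • (Q y - D y • (f y).1) := by
      rw [hlam, add_smul, mul_smul, smul_sub]; abel
    have hdiff : u - (f y).1 = (lam⁻¹ * b) • (Q y - D y • (f y).1) := by
      calc u - (f y).1 = lam⁻¹ • (a • (f y).1 + b • Q y) - lam⁻¹ • (lam • (f y).1) := by
            rw [hu, smul_smul, inv_mul_cancel₀ hlampos.ne', one_smul]
        _ = lam⁻¹ • (a • (f y).1 + b • Q y - lam • (f y).1) := (smul_sub _ _ _).symm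
        _ = lam⁻¹ • (b • (Q y - D y • (f y).1)) := by rw [hstep]
        _ = (lam⁻¹ * b) • (Q y - D y • (f y).1) := smul_smul _ _ _
    have hnorm : ‖u - (f y).1‖ < δ := by
      rw [hdiff, norm_smul, Real.norm_eq_abs,
        abs_of_nonneg (mul_nonneg (inv_nonneg.2 hlampos.le) hb)]
      have h6 : lam⁻¹ * b * ‖Q y - D y • (f y).1‖ ≤ lam⁻¹ * b * (D y * (δ/2)) :=
        mul_le_mul_of_nonneg_left (hQD y) (mul_nonneg (inv_nonneg.2 hlampos.le) hb)
      have h8 : lam⁻¹ * (b * D y) ≤ 1 := by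
        calc lam⁻¹ * (b * D y) ≤ lam⁻¹ * lam :=
              mul_le_mul_of_nonneg_left hbD (inv_nonneg.2 hlampos.le)
          _ = 1 := inv_mul_cancel₀ hlampos.ne'
      have h9 : lam⁻¹ * b * (D y * (δ/2)) = (lam⁻¹ * (b * D y)) * (δ/2) := by ring
      have h10 : (lam⁻¹ * (b * D y)) * (δ/2) ≤ 1 * (δ/2) :=
        mul_le_mul_of_nonneg_right h8 (by linarith)
      calc lam⁻¹ * b * ‖Q y - D y • (f y).1‖ ≤ (lam⁻¹ * (b * D y)) * (δ/2) := by
            rw [← h9]; exact h6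
        _ ≤ 1 * (δ/2) := h10
        _ < δ := by linarith
    have huV : u ∈ complexStiefel m (r'+1) := by
      apply hδ
      rw [Metric.mem_thickening_iff]
      exact ⟨(f y).1, mem_range_self y, by rwa [dist_eq_norm]⟩
    rw [hkey]
    exact aux_smul_LI hlampos.ne' huV
  -- choose the generic perturbation c
  obtain ⟨KG, hKG⟩ := auxG_lipschitz m (r'+1) k Tf hρpos.le (fun y => (f y).1)
  obtain ⟨c, hc⟩ := aux_exists_c m r' k hrm hkobs G KG (by rw [hGdef]; exact hKG)
  -- the normalization map
  set n : EuclideanSpace ℝ (Fin k) → {x : EuclideanSpace ℝ (Fin k) // ‖x‖ = 1} := fun x =>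
    if hx : x = 0 then y₀ else ⟨‖x‖⁻¹ • x, by
      rw [norm_smul, Real.norm_eq_abs, abs_of_nonneg (inv_nonneg.2 (norm_nonneg x)),
        inv_mul_cancel₀ (norm_ne_zero_iff.2 hx)]⟩ with hn
  have hnval : ∀ x, x ≠ 0 → (n x).1 = ‖x‖⁻¹ • x := by
    intro x hx; rw [hn]; simp [dif_neg hx]
  have hn1 : ∀ (x) (h : ‖x‖ = 1), n x = ⟨x, h⟩ := by
    intro x h
    have hx0 : x ≠ 0 := by intro h0; rw [h0] at h; simp at h
    apply Subtype.ext; rw [hnval x hx0, h, inv_one, one_smul]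
  have hncont : ∀ x : EuclideanSpace ℝ (Fin k), x ≠ 0 → ContinuousAt n x := by
    intro x hx
    rw [ContinuousAt, tendsto_subtype_rng]
    have hev : (fun z => (n z).1) =ᶠ[nhds x] fun z => ‖z‖⁻¹ • z := by
      filter_upwards [eventually_ne_nhds hx] with z hz
      exact hnval z hz
    refine Filter.Tendsto.congr' hev.symm ?_
    have hca : ContinuousAt (fun z : EuclideanSpace ℝ (Fin k) => ‖z‖⁻¹ • z) x :=
      ((continuous_norm.continuousAt).inv₀ (norm_ne_zero_iff.2 hx)).smul continuousAt_id
    rw [hnval x hx]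
    exact hca
  -- continuity of Q
  have hQcont : Continuous Q := by
    rw [hQdef]; unfold auxQ
    refine continuous_finset_sum _ fun t _ => ?_
    exact (continuous_const.max (continuous_const.sub (continuous_id.dist continuous_const))).smul
      continuous_const
  -- coefficients
  set aco : EuclideanSpace ℝ (Fin k) → ℝ := fun x => max 0 (2*‖x‖ - 1) with haco
  set bco : EuclideanSpace ℝ (Fin k) → ℝ := fun x => min (2*‖x‖) (2 - 2*‖x‖) with hbco
  set eco : EuclideanSpace ℝ (Fin k) → ℝ := fun x => max 0 (1 - 2*‖x‖) with heco
  have haco_cont : Continuous aco := continuous_const.max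
    ((continuous_const.mul continuous_norm).sub continuous_const)
  have hbco_cont : Continuous bco := (continuous_const.mul continuous_norm).min
    (continuous_const.sub (continuous_const.mul continuous_norm))
  have heco_cont : Continuous eco := continuous_const.max
    (continuous_const.sub (continuous_const.mul continuous_norm))
  set F₀ : EuclideanSpace ℝ (Fin k) → (Fin (r'+1) → EuclideanSpace ℂ (Fin m)) :=
    fun x => aco x • (f (n x)).1 + bco x • Q (n x) + eco x • c with hF₀
  -- membership
  have hF₀mem : ∀ x : EuclideanSpace ℝ (Fin k), ‖x‖ ≤ 1 → F₀ x ∈ complexStiefel m (r'+1) := by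
    intro x hx1
    rcases lt_or_ge ‖x‖ (1/2) with hhalf | hhalf
    · -- inner region
      have ha0 : aco x = 0 := max_eq_left (by linarith)
      have hb2 : bco x = 2*‖x‖ := min_eq_left (by linarith)
      have he : eco x = 1 - 2*‖x‖ := max_eq_right (by linarith)
      set s : ℝ := 1 - 2*‖x‖ with hs
      have hspos : 0 < s := by rw [hs]; linarith
      by_contra hdep
      have hFx : F₀ x = (2*‖x‖) • Q (n x) + s • c := by
        simp only [hF₀]
        rw [ha0, hb2, he, zero_smul, zero_add]
      have h2 : s⁻¹ • F₀ x = (s⁻¹ * (2*‖x‖)) • Q (n x) + c := by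
        rw [hFx, smul_add, smul_smul, smul_smul, inv_mul_cancel₀ hspos.ne', one_smul]
      have h1 : ¬ LinearIndependent ℂ ((s⁻¹ * (2*‖x‖)) • Q (n x) + c) := by
        have h3 := aux_dep_smul s⁻¹ (hdep : ¬ LinearIndependent ℂ (F₀ x))
        rw [show (fun i => s⁻¹ • F₀ x i) = s⁻¹ • F₀ x from rfl, h2] at h3
        exact h3
      obtain ⟨j, w, aa, hrep⟩ := aux_exists_rep h1
      refine hc j w aa ((s⁻¹ * (2*‖x‖)) • (n x).1) ?_
      have hGn : G ((s⁻¹ * (2*‖x‖)) • (n x).1) = (s⁻¹ * (2*‖x‖)) • Q (n x) := by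
        rw [hGdef, hQdef]
        exact auxG_smul m (r'+1) k Tf ρ (fun y => (f y).1)
          (mul_nonneg (inv_nonneg.2 hspos.le) (by positivity)) (n x)
      rw [hGn]
      have : auxPsi m r' j (w, aa) = ((s⁻¹ * (2*‖x‖)) • Q (n x) + c) := by
        rw [hrep]; rfl
      rw [this]; abel
    · -- outer region
      have ha : aco x = 2*‖x‖ - 1 := max_eq_right (by linarith)
      have hb : bco x = 2 - 2*‖x‖ := min_eq_right (by linarith)
      have he : eco x = 0 := max_eq_left (by linarith)
      simp only [hF₀]
      rw [ha, hb, he, zero_smul, add_zero]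
      exact hmem (n x) _ _ (by linarith) (by linarith) (by linarith)
  -- continuity
  have hF₀cont : Continuous F₀ := by
    rw [continuous_iff_continuousAt]
    intro x
    by_cases hx : x = 0
    · subst hx
      have hev : (fun z => G ((2:ℝ) • z) + eco z • c) =ᶠ[nhds (0 : EuclideanSpace ℝ (Fin k))] F₀ := by
        filter_upwards [Metric.ball_mem_nhds (0 : EuclideanSpace ℝ (Fin k)) (by norm_num : (0:ℝ) < 1/2)] with z hz
        rw [mem_ball_zero_iff] at hz
        have ha0 : aco z = 0 := max_eq_left (by linarith)
        have hb2 : bco z = 2*‖z‖ := min_eq_left (by linarith)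
        have hGz : G ((2:ℝ) • z) = bco z • Q (n z) := by
          by_cases hz0 : z = 0
          · rw [hb2, hz0]
            simp only [smul_zero, norm_zero, mul_zero, zero_smul]
            rw [hGdef]
            exact auxG_zero m (r'+1) k Tf ρ (fun y => (f y).1)
          · have h2z : (2:ℝ) • z = (2*‖z‖) • (n z).1 := by
              rw [hnval z hz0, smul_smul, mul_assoc,
                mul_inv_cancel₀ (norm_ne_zero_iff.2 hz0), mul_one]
            rw [h2z, hb2, hGdef, hQdef]
            exact auxG_smul m (r'+1) k Tf ρ (fun y => (f y).1) (by positivity) (n z)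
        have hFz : F₀ z = bco z • Q (n z) + eco z • c := by
          simp only [hF₀]
          rw [ha0, zero_smul, zero_add]
        rw [hFz, hGz]
      refine ContinuousAt.congr ?_ hev
      exact ((hKG.continuous.comp (continuous_const_smul (2:ℝ))).add
        (heco_cont.smul continuous_const)).continuousAt
    · have hfb : ContinuousAt (fun z => (f (n z)).1) x :=
        ((continuous_subtype_val.comp hf).continuousAt).comp (hncont x hx)
      have hQn : ContinuousAt (fun z => Q (n z)) x :=
        hQcont.continuousAt.comp (hncont x hx)
      exact ((haco_cont.continuousAt.smul hfb).add
        (hbco_cont.continuousAt.smul hQn)).add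
        (heco_cont.continuousAt.smul continuousAt_const)
  -- assemble
  refine ⟨fun x => ⟨F₀ x.1, hF₀mem x.1 x.2⟩, ?_, ?_⟩
  · exact (hF₀cont.comp continuous_subtype_val).subtype_mk _
  · intro x
    apply Subtype.ext
    show F₀ x.1 = (f x).1
    have hx1 : ‖x.1‖ = 1 := x.2
    have ha : aco x.1 = 1 := by show (0:ℝ) ⊔ (2*‖x.1‖ - 1) = 1; rw [hx1]; norm_num
    have hb : bco x.1 = 0 := by show (2*‖x.1‖) ⊓ (2 - 2*‖x.1‖) = 0; rw [hx1]; norm_num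
    have he : eco x.1 = 0 := by show (0:ℝ) ⊔ (1 - 2*‖x.1‖) = 0; rw [hx1]; norm_num
    show F₀ x.1 = (f x).1
    simp only [hF₀]
    rw [ha, hb, he, one_smul, zero_smul, zero_smul, add_zero, add_zero, hn1 x.1 hx1]
end
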